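/- arXiv:2112.02424 — 4 statements merged into one kernel-verified Lean document; each statement's English description precedes it below -/
import Mathlib

section
/- Let P and Q be probability measures on ℝⁿ with P absolutely continuous with respect to Q, and let f: [0,∞) → ℝ be convex, lower semicontinuous and differentiable with f(1) = 0. Then the supremum in the variational representation D_f(P‖Q) = sup_h { ∫ h dP − ∫ f*(h) dQ } is attained at h = f'(dP/dQ); that is, ∫ f'(dP/dQ) dP − ∫ f*(f'(dP/dQ)) dQ = D_f(P‖Q). -/
open MeasureTheory Set

/-- Convex conjugate of `f`, where the supremum is taken over `x ≥ 0`
(the domain of `f` is `[0, ∞)`). -/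
noncomputable def fConj (f : ℝ → ℝ) (y : ℝ) : ℝ :=
  sSup {z : ℝ | ∃ x : ℝ, 0 ≤ x ∧ z = x * y - f x}

/-- The `f`-divergence `D_f(P‖Q) = ∫ f(dP/dQ) dQ`. -/
noncomputable def fDiv {n : ℕ} (f : ℝ → ℝ) (P Q : Measure (Fin n → ℝ)) : ℝ :=
  ∫ x, f ((P.rnDeriv Q x).toReal) ∂Q

/-- Gradient inequality for a convex function on `[0, ∞)`. -/
lemma grad_ineq (f f' : ℝ → ℝ) (hconv : ConvexOn ℝ (Ici (0:ℝ)) f)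
    (hderiv : ∀ x ∈ Ici (0:ℝ), HasDerivWithinAt f (f' x) (Ici (0:ℝ)) x)
    {t x : ℝ} (ht : 0 ≤ t) (hx : 0 ≤ x) :
    f' t * (x - t) ≤ f x - f t := by
  rcases lt_trichotomy x t with h | h | h
  · have hs := hconv.slope_le_of_hasDerivWithinAt hx ht h (hderiv t ht)
    rw [slope_def_field, div_le_iff₀ (by linarith)] at hs
    nlinarith
  · simp [h]
  · have hs := hconv.le_slope_of_hasDerivWithinAt ht hx h (hderiv t ht)
    rw [slope_def_field, le_div_iff₀ (by linarith)] at hs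
    nlinarith

/-- At `y = f' t` with `t ≥ 0`, the conjugate's supremum is attained at `x = t`. -/
lemma fConj_deriv (f f' : ℝ → ℝ) (hconv : ConvexOn ℝ (Ici (0:ℝ)) f)
    (hderiv : ∀ x ∈ Ici (0:ℝ), HasDerivWithinAt f (f' x) (Ici (0:ℝ)) x)
    {t : ℝ} (ht : 0 ≤ t) :
    fConj f (f' t) = t * f' t - f t := by
  refine IsGreatest.csSup_eq ⟨⟨t, ht, rfl⟩, ?_⟩
  rintro z ⟨x, hx, rfl⟩
  have := grad_ineq f f' hconv hderiv ht hx
  nlinarith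

/-- The supremum in the variational representation of the `f`-divergence is attained at
`h = f'(dP/dQ)`: one has `∫ f'(dP/dQ) dP − ∫ f*(f'(dP/dQ)) dQ = D_f(P‖Q)`. -/
theorem fDiv_variational_attained {n : ℕ} (P Q : Measure (Fin n → ℝ))
    [IsProbabilityMeasure P] [IsProbabilityMeasure Q] (hPQ : P ≪ Q)
    (f f' : ℝ → ℝ)
    (hconv : ConvexOn ℝ (Ici (0:ℝ)) f)
    (hlsc : LowerSemicontinuousOn f (Ici (0:ℝ)))
    (hderiv : ∀ x ∈ Ici (0:ℝ), HasDerivWithinAt f (f' x) (Ici (0:ℝ)) x)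
    (hf1 : f 1 = 0)
    (hint0 : Integrable (fun x => f ((P.rnDeriv Q x).toReal)) Q)
    (hint1 : Integrable (fun x => f' ((P.rnDeriv Q x).toReal)) P)
    (hint2 : Integrable (fun x => fConj f (f' ((P.rnDeriv Q x).toReal))) Q) :
    (∫ x, f' ((P.rnDeriv Q x).toReal) ∂P)
      - (∫ x, fConj f (f' ((P.rnDeriv Q x).toReal)) ∂Q) = fDiv f P Q := by
  set t : (Fin n → ℝ) → ℝ := fun x => (P.rnDeriv Q x).toReal with ht
  have hteq : ∀ x, fConj f (f' (t x)) = t x * f' (t x) - f (t x) := fun x =>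
    fConj_deriv f f' hconv hderiv ENNReal.toReal_nonneg
  have hg : Integrable (fun x => t x * f' (t x) - f (t x)) Q := by
    exact hint2.congr (Filter.Eventually.of_forall fun x => hteq x)
  have h1 : (∫ x, f' (t x) ∂P) = ∫ x, t x * f' (t x) ∂Q := by
    haveI := Measure.haveLebesgueDecomposition_of_sigmaFinite P Q
    rw [← MeasureTheory.integral_rnDeriv_smul hPQ (f := fun x => f' (t x))]
    simp [smul_eq_mul]
    rfl
  have h2 : (∫ x, fConj f (f' (t x)) ∂Q) = ∫ x, t x * f' (t x) - f (t x) ∂Q := by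
    exact integral_congr_ae (Filter.Eventually.of_forall fun x => hteq x)
  have htf : Integrable (fun x => t x * f' (t x)) Q := by
    have := hg.add hint0
    refine this.congr (Filter.Eventually.of_forall fun x => by simp only [Pi.add_apply, t]; ring)
  rw [h1, h2, ← integral_sub htf hg]
  simp [fDiv]
  rfl
end

section
/- (Variational formula for the KL divergence with a reference measure.) Let P, Q and μ be probability measures on ℝⁿ admitting positive densities (also denoted P, Q, μ) with respect to Lebesgue measure, with P absolutely continuous with respect to Q. Then D(P‖Q) = 1 + sup_h { ∫ log( h(x)·μ(x)/Q(x) ) dP(x) − ∫ h dμ }, where the supremum is over all measurable functions h: ℝⁿ → (0,∞) for which both integrals are well-defined, and the supremum is attained at h = dP/dμ. -/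
open MeasureTheory Set
open scoped ENNReal NNReal

lemma wd_integrable_iff {α : Type*} [MeasurableSpace α] {ν : Measure α} {m : α → ℝ}
    (hmm : Measurable m) (hmpos : ∀ x, 0 < m x) (g : α → ℝ) :
    Integrable g (ν.withDensity fun x => ENNReal.ofReal (m x)) ↔
      Integrable (fun x => g x * m x) ν := by
  rw [integrable_withDensity_iff (hmm.ennreal_ofReal) (ae_of_all _ fun x => ENNReal.ofReal_lt_top)]
  refine integrable_congr (ae_of_all _ fun x => ?_)
  simp only []
  rw [ENNReal.toReal_ofReal (hmpos x).le]

lemma wd_integral {α : Type*} [MeasurableSpace α] {ν : Measure α} {m : α → ℝ}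
    (hmm : Measurable m) (hmpos : ∀ x, 0 < m x) (g : α → ℝ) :
    ∫ x, g x ∂(ν.withDensity fun x => ENNReal.ofReal (m x)) = ∫ x, g x * m x ∂ν := by
  have h : (fun x => ENNReal.ofReal (m x)) = fun x => ((fun y => (m y).toNNReal) x : ℝ≥0∞) := rfl
  rw [h, integral_withDensity_eq_integral_smul (by measurability) g]
  refine integral_congr_ae (ae_of_all _ fun x => ?_)
  simp [NNReal.smul_def, Real.coe_toNNReal _ (hmpos x).le, mul_comm]


/-- The feasible values of the variational formula for the KL divergence with reference
measure `μ` (with density `m`): values `∫ log(h·m/q) dP − ∫ h dμ` over measurable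
positive `h` for which both integrals are well-defined. -/
def klVarSet {n : ℕ} (q m : (Fin n → ℝ) → ℝ) (P μ : Measure (Fin n → ℝ)) : Set ℝ :=
  {r : ℝ | ∃ h : (Fin n → ℝ) → ℝ, Measurable h ∧ (∀ x, 0 < h x) ∧
    Integrable (fun x => Real.log (h x * m x / q x)) P ∧ Integrable h μ ∧
    r = (∫ x, Real.log (h x * m x / q x) ∂P) - ∫ x, h x ∂μ}

/-- Variational formula for the KL divergence with a reference measure `μ`:
`D(P‖Q) = 1 + sup_h { ∫ log(h·μ/Q) dP − ∫ h dμ }`, and the supremum is attained at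
`h = dP/dμ`.  Here `P`, `Q`, `μ` are probability measures with positive densities
`p`, `q`, `m` with respect to Lebesgue measure, and `P ≪ Q`. -/
theorem klDiv_variational_with_reference {n : ℕ}
    (p q m : (Fin n → ℝ) → ℝ)
    (hpm : Measurable p) (hqm : Measurable q) (hmm : Measurable m)
    (hppos : ∀ x, 0 < p x) (hqpos : ∀ x, 0 < q x) (hmpos : ∀ x, 0 < m x)
    (P Q μ : Measure (Fin n → ℝ))
    (hP : P = volume.withDensity fun x => ENNReal.ofReal (p x))
    (hQ : Q = volume.withDensity fun x => ENNReal.ofReal (q x))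
    (hμ : μ = volume.withDensity fun x => ENNReal.ofReal (m x))
    [IsProbabilityMeasure P] [IsProbabilityMeasure Q] [IsProbabilityMeasure μ]
    (hPQ : P ≪ Q)
    (hKLfin : Integrable (fun x => Real.log (p x / q x)) P) :
    (∫ x, Real.log (p x / q x) ∂P) = 1 + sSup (klVarSet q m P μ)
    ∧ IsGreatest (klVarSet q m P μ)
        ((∫ x, Real.log ((p x / m x) * m x / q x) ∂P) - ∫ x, p x / m x ∂μ) := by
  set D := ∫ x, Real.log (p x / q x) ∂P with hD
  -- basic facts
  have hp_int_vol : Integrable p volume := by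
    have h1 : Integrable (fun _ => (1 : ℝ)) P := integrable_const 1
    rw [hP, wd_integrable_iff hpm hppos] at h1
    simpa using h1
  have hp_integral_one : ∫ x, p x ∂(volume : Measure (Fin n → ℝ)) = 1 := by
    have h1 : ∫ x, (1 : ℝ) ∂P = 1 := by simp
    rw [hP, wd_integral hpm hppos] at h1
    simpa using h1
  -- pointwise identity for the attaining h
  have hpt : ∀ x, (p x / m x) * m x / q x = p x / q x := fun x => by
    rw [div_mul_cancel₀ _ (hmpos x).ne']
  have hint_eq : (∫ x, Real.log ((p x / m x) * m x / q x) ∂P) = D := by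
    rw [hD]; exact integral_congr_ae (ae_of_all _ fun x => by dsimp only; rw [hpt x])
  have hμint_eq : (∫ x, p x / m x ∂μ) = 1 := by
    rw [hμ, wd_integral hmm hmpos]
    rw [← hp_integral_one]
    exact integral_congr_ae (ae_of_all _ fun x => div_mul_cancel₀ _ (hmpos x).ne')
  -- membership of the attaining value
  have hmem : (∫ x, Real.log ((p x / m x) * m x / q x) ∂P) - (∫ x, p x / m x ∂μ)
      ∈ klVarSet q m P μ := by
    refine ⟨fun x => p x / m x, hpm.div hmm, fun x => div_pos (hppos x) (hmpos x), ?_, ?_, rfl⟩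
    · exact hKLfin.congr (ae_of_all _ fun x => by dsimp only; rw [hpt x])
    · rw [hμ, wd_integrable_iff hmm hmpos]
      exact hp_int_vol.congr (ae_of_all _ fun x => (div_mul_cancel₀ _ (hmpos x).ne').symm)
  -- upper bound
  have hub : ∀ r ∈ klVarSet q m P μ, r ≤ D - 1 := by
    rintro r ⟨h, hhm, hhpos, hlog_int, hh_int, rfl⟩
    -- ∫ h dμ = ∫ h*m dvol
    have hhμ : ∫ x, h x ∂μ = ∫ x, h x * m x ∂(volume : Measure (Fin n → ℝ)) := by
      rw [hμ, wd_integral hmm hmpos]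
    have hhm_int : Integrable (fun x => h x * m x) volume := by
      rw [hμ, wd_integrable_iff hmm hmpos] at hh_int; exact hh_int
    -- integrability of h*m/p w.r.t. P
    have hdivP_int : Integrable (fun x => h x * m x / p x) P := by
      rw [hP, wd_integrable_iff hpm hppos]
      exact hhm_int.congr (ae_of_all _ fun x => (div_mul_cancel₀ _ (hppos x).ne').symm)
    have hdivP_val : ∫ x, h x * m x / p x ∂P = ∫ x, h x ∂μ := by
      rw [hP, wd_integral hpm hppos, hhμ]
      exact integral_congr_ae (ae_of_all _ fun x => div_mul_cancel₀ _ (hppos x).ne')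
    -- pointwise log decomposition
    have hlogpt : ∀ x, Real.log (h x * m x / p x)
        = Real.log (h x * m x / q x) - Real.log (p x / q x) := fun x => by
      have hhm0 : h x * m x ≠ 0 := (mul_pos (hhpos x) (hmpos x)).ne'
      rw [Real.log_div hhm0 (hppos x).ne', Real.log_div hhm0 (hqpos x).ne',
        Real.log_div (hppos x).ne' (hqpos x).ne']
      ring
    have hlogp_int : Integrable (fun x => Real.log (h x * m x / p x)) P :=
      (hlog_int.sub hKLfin).congr (ae_of_all _ fun x => (hlogpt x).symm)
    have hsplit : ∫ x, Real.log (h x * m x / q x) ∂P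
        = D + ∫ x, Real.log (h x * m x / p x) ∂P := by
      rw [hD]
      have : ∫ x, Real.log (h x * m x / p x) ∂P
          = (∫ x, Real.log (h x * m x / q x) ∂P) - ∫ x, Real.log (p x / q x) ∂P := by
        rw [← integral_sub hlog_int hKLfin]
        exact integral_congr_ae (ae_of_all _ fun x => hlogpt x)
      rw [this]; ring
    have hle : ∫ x, Real.log (h x * m x / p x) ∂P ≤ (∫ x, h x ∂μ) - 1 := by
      calc ∫ x, Real.log (h x * m x / p x) ∂P
          ≤ ∫ x, (h x * m x / p x - 1) ∂P := by
            refine integral_mono hlogp_int (hdivP_int.sub (integrable_const 1)) fun x => ?_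
            exact Real.log_le_sub_one_of_pos
              (div_pos (mul_pos (hhpos x) (hmpos x)) (hppos x))
        _ = (∫ x, h x ∂μ) - 1 := by
            rw [integral_sub hdivP_int (integrable_const 1), hdivP_val]; simp
    linarith [hsplit, hle]
  have hgreat : IsGreatest (klVarSet q m P μ)
      ((∫ x, Real.log ((p x / m x) * m x / q x) ∂P) - ∫ x, p x / m x ∂μ) :=
    ⟨hmem, fun r hr => by rw [hint_eq, hμint_eq]; exact hub r hr⟩
  refine ⟨?_, hgreat⟩
  rw [hgreat.csSup_eq, hint_eq, hμint_eq]
  ring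
end

section
/- (Variational formula for the generalized entropy.) Let m > 1, let P be a probability measure on ℝⁿ with density P(x), and let Q be the uniform probability measure on a measurable set S ⊆ ℝⁿ of finite positive Lebesgue volume Ω containing the support of P. Then G(P) = Ω^{1−m} · sup_h { ∫ (m/(m−1))·h(x)^{m−1} dP(x) − ∫ h(z)^m dQ(z) }, where the supremum is over measurable functions h: ℝⁿ → [0,∞) for which both integrals are well-defined, and the supremum is attained at h = dP/dQ. -/
open MeasureTheory Set
open scoped ENNReal NNReal

/-- The feasible values of the variational formula for the generalized entropy:
values `∫ (m/(m−1)) h^{m−1} dP − ∫ h^m dQ` over measurable nonnegative `h` for which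
both integrals are well-defined. -/
def entVarSet {n : ℕ} (m : ℝ) (P Q : Measure (Fin n → ℝ)) : Set ℝ :=
  {r : ℝ | ∃ h : (Fin n → ℝ) → ℝ, Measurable h ∧ (∀ x, 0 ≤ h x) ∧
    Integrable (fun x => (m / (m - 1)) * h x ^ (m - 1)) P ∧
    Integrable (fun x => h x ^ m) Q ∧
    r = (∫ x, (m / (m - 1)) * h x ^ (m - 1) ∂P) - ∫ x, h x ^ m ∂Q}

lemma young_aux {m Ω a b : ℝ} (hm : 1 < m) (hΩ : 0 < Ω) (ha : 0 ≤ a) (hb : 0 ≤ b) :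
    m / (m - 1) * a ^ (m - 1) * b ≤ Ω⁻¹ * a ^ m + Ω ^ (m - 1) / (m - 1) * b ^ m := by
  have hm1 : (0:ℝ) < m - 1 := by linarith
  have hmpos : (0:ℝ) < m := by linarith
  have hconj : (m / (m - 1)).HolderConjugate m := by
    rw [Real.holderConjugate_iff]
    constructor
    · rw [lt_div_iff₀ hm1]; linarith
    · field_simp; ring
  set u := a ^ (m - 1) * Ω ^ (-(m - 1) / m) with hu_def
  set v := Ω ^ ((m - 1) / m) * b with hv_def
  have hu0 : 0 ≤ u := mul_nonneg (Real.rpow_nonneg ha _) (Real.rpow_nonneg hΩ.le _)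
  have hv0 : 0 ≤ v := mul_nonneg (Real.rpow_nonneg hΩ.le _) hb
  have h1 : u * v = a ^ (m - 1) * b := by
    have : Ω ^ (-(m - 1) / m) * Ω ^ ((m - 1) / m) = 1 := by
      have e : -(m - 1) / m + (m - 1) / m = 0 := by ring
      rw [← Real.rpow_add hΩ, e, Real.rpow_zero]
    calc u * v = a ^ (m-1) * b * (Ω ^ (-(m - 1) / m) * Ω ^ ((m - 1) / m)) := by ring
      _ = a ^ (m-1) * b := by rw [this, mul_one]
  have hu : u ^ (m / (m - 1)) = a ^ m * Ω⁻¹ := by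
    rw [Real.mul_rpow (Real.rpow_nonneg ha _) (Real.rpow_nonneg hΩ.le _),
      ← Real.rpow_mul ha, ← Real.rpow_mul hΩ.le]
    have e1 : (m - 1) * (m / (m - 1)) = m := by field_simp
    have e2 : -(m - 1) / m * (m / (m - 1)) = -1 := by field_simp
    rw [e1, e2, Real.rpow_neg_one]
  have hv : v ^ m = Ω ^ (m - 1) * b ^ m := by
    rw [Real.mul_rpow (Real.rpow_nonneg hΩ.le _) hb, ← Real.rpow_mul hΩ.le]
    have : (m - 1) / m * m = m - 1 := by field_simp
    rw [this]
  have key := Real.young_inequality_of_nonneg hu0 hv0 hconj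
  rw [h1, hu, hv] at key
  calc m / (m - 1) * a ^ (m - 1) * b = m / (m - 1) * (a ^ (m - 1) * b) := by ring
    _ ≤ m / (m - 1) * (a ^ m * Ω⁻¹ / (m / (m - 1)) + Ω ^ (m - 1) * b ^ m / m) :=
        mul_le_mul_of_nonneg_left key (by positivity)
    _ = Ω⁻¹ * a ^ m + Ω ^ (m - 1) / (m - 1) * b ^ m := by field_simp

lemma mul_rpow_sub_one {m t : ℝ} (hm : 1 < m) (ht : 0 ≤ t) : t * t ^ (m - 1) = t ^ m := by
  rcases eq_or_lt_of_le ht with h | h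
  · rw [← h]
    rw [Real.zero_rpow (by linarith), Real.zero_rpow (by linarith), mul_zero]
  · nth_rewrite 1 [← Real.rpow_one t]
    rw [← Real.rpow_add h]; ring_nf


/-- Variational formula for the generalized entropy `G(P) = (1/(m−1)) ∫ P(x)^m dx`:
with `Q` the uniform probability measure on a set `S` of volume `Ω` containing the
support of `P`, one has
`G(P) = Ω^{1−m} · sup_h { ∫ (m/(m−1)) h^{m−1} dP − ∫ h^m dQ }`, and the supremum is
attained at `h = dP/dQ = Ω·p`. -/
theorem generalizedEntropy_variational {n : ℕ} (m : ℝ) (hm : 1 < m)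
    (p : (Fin n → ℝ) → ℝ) (hpm : Measurable p) (hp0 : ∀ x, 0 ≤ p x)
    (P : Measure (Fin n → ℝ))
    (hP : P = volume.withDensity fun x => ENNReal.ofReal (p x))
    [IsProbabilityMeasure P]
    (S : Set (Fin n → ℝ)) (hS : MeasurableSet S)
    (Ω : ℝ) (hΩ : 0 < Ω) (hvol : volume S = ENNReal.ofReal Ω)
    (hsupp : ∀ x, p x ≠ 0 → x ∈ S)
    (Q : Measure (Fin n → ℝ))
    (hQ : Q = (ENNReal.ofReal Ω)⁻¹ • volume.restrict S)
    (hGfin : Integrable (fun x => p x ^ m) volume) :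
    (1 / (m - 1)) * (∫ x, p x ^ m) = Ω ^ (1 - m) * sSup (entVarSet m P Q)
    ∧ IsGreatest (entVarSet m P Q)
        ((∫ x, (m / (m - 1)) * (Ω * p x) ^ (m - 1) ∂P)
          - ∫ x, (Ω * p x) ^ m ∂Q) := by
  have hm1 : (0:ℝ) < m - 1 := by linarith
  have hm0 : (0:ℝ) < m := by linarith
  set c := ENNReal.ofReal Ω with hc
  have hc0 : c ≠ 0 := (ENNReal.ofReal_pos.mpr hΩ).ne'
  have hct : c ≠ ⊤ := ENNReal.ofReal_ne_top
  have hcinv0 : c⁻¹ ≠ 0 := ENNReal.inv_ne_zero.mpr hct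
  have hcinvt : c⁻¹ ≠ ⊤ := ENNReal.inv_ne_top.mpr hc0
  have hcinvR : (c⁻¹).toReal = Ω⁻¹ := by
    rw [ENNReal.toReal_inv, hc, ENNReal.toReal_ofReal hΩ.le]
  have hd : Measurable fun x => (p x).toNNReal := hpm.real_toNNReal
  have hPd : P = volume.withDensity fun x => ((p x).toNNReal : ℝ≥0∞) := hP
  have hsm : ∀ g : (Fin n → ℝ) → ℝ,
      (fun x => (p x).toNNReal • g x) = fun x => p x * g x := by
    intro g; funext x; simp [NNReal.smul_def, Real.coe_toNNReal _ (hp0 x)]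
  have hPint : ∀ g : (Fin n → ℝ) → ℝ, ∫ x, g x ∂P = ∫ x, p x * g x := by
    intro g
    rw [hPd, integral_withDensity_eq_integral_smul hd, hsm]
  have hPintg : ∀ g : (Fin n → ℝ) → ℝ,
      Integrable g P ↔ Integrable (fun x => p x * g x) volume := by
    intro g
    rw [hPd, integrable_withDensity_iff_integrable_smul hd, hsm]
  have hQint : ∀ g : (Fin n → ℝ) → ℝ, ∫ x, g x ∂Q = Ω⁻¹ * ∫ x in S, g x := by
    intro g; rw [hQ, integral_smul_measure, hcinvR, smul_eq_mul]
  have hQintg : ∀ g : (Fin n → ℝ) → ℝ,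
      Integrable g Q ↔ Integrable g (volume.restrict S) := by
    intro g; rw [hQ, integrable_smul_measure hcinv0 hcinvt]
  have hvanish : ∀ x, x ∉ S → p x = 0 := by
    intro x hx; by_contra h; exact hx (hsupp x h)
  set I := ∫ x, p x ^ m with hI
  have hSI : ∫ x in S, p x ^ m = I := by
    apply setIntegral_eq_integral_of_forall_compl_eq_zero
    intro x hx; rw [hvanish x hx, Real.zero_rpow (by linarith)]
  -- pointwise identity for h₀ = Ω * p
  have hfun : (fun x => p x * (m / (m - 1) * (Ω * p x) ^ (m - 1)))
      = fun x => m / (m - 1) * Ω ^ (m - 1) * p x ^ m := by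
    funext x
    rw [Real.mul_rpow hΩ.le (hp0 x)]
    calc p x * (m / (m - 1) * (Ω ^ (m-1) * p x ^ (m-1)))
        = m / (m - 1) * Ω ^ (m-1) * (p x * p x ^ (m-1)) := by ring
      _ = m / (m - 1) * Ω ^ (m - 1) * p x ^ m := by
          rw [mul_rpow_sub_one hm (hp0 x)]
  have hfun2 : (fun x => (Ω * p x) ^ m) = fun x => Ω ^ m * p x ^ m := by
    funext x; rw [Real.mul_rpow hΩ.le (hp0 x)]
  -- value of both integrals at h₀
  have hA : ∫ x, m / (m - 1) * (Ω * p x) ^ (m - 1) ∂P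
      = m / (m - 1) * Ω ^ (m - 1) * I := by
    rw [hPint, hfun, integral_const_mul]
  have hB : ∫ x, (Ω * p x) ^ m ∂Q = Ω⁻¹ * Ω ^ m * I := by
    rw [hQint, hfun2, integral_const_mul, hSI, ← mul_assoc]
  have hOm : Ω⁻¹ * Ω ^ m = Ω ^ (m - 1) := by
    rw [← Real.rpow_neg_one Ω, ← Real.rpow_add hΩ]
    norm_num
    ring_nf
  have hval : (∫ x, m / (m - 1) * (Ω * p x) ^ (m - 1) ∂P) - ∫ x, (Ω * p x) ^ m ∂Q
      = Ω ^ (m - 1) / (m - 1) * I := by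
    rw [hA, hB, hOm]; field_simp; ring
  -- integrability at h₀
  have hAint : Integrable (fun x => m / (m - 1) * (Ω * p x) ^ (m - 1)) P := by
    rw [hPintg, hfun]
    exact hGfin.const_mul _
  have hBint : Integrable (fun x => (Ω * p x) ^ m) Q := by
    rw [hQintg, hfun2]
    exact (hGfin.restrict).const_mul _
  have hgreat : IsGreatest (entVarSet m P Q)
      ((∫ x, (m / (m - 1)) * (Ω * p x) ^ (m - 1) ∂P) - ∫ x, (Ω * p x) ^ m ∂Q) := by
    constructor
    · exact ⟨fun x => Ω * p x, hpm.const_mul Ω, fun x => mul_nonneg hΩ.le (hp0 x),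
        hAint, hBint, rfl⟩
    · rintro r ⟨h, hmeas, hpos, hintP, hintQ, rfl⟩
      rw [hval]
      have hintP' : Integrable (fun x => p x * (m / (m - 1) * h x ^ (m - 1))) volume :=
        (hPintg _).mp hintP
      have hintQ' : Integrable (fun x => h x ^ m) (volume.restrict S) :=
        (hQintg _).mp hintQ
      rw [hPint, hQint]
      have hfull : ∫ x, p x * (m / (m - 1) * h x ^ (m - 1))
          = ∫ x in S, p x * (m / (m - 1) * h x ^ (m - 1)) := by
        symm
        apply setIntegral_eq_integral_of_forall_compl_eq_zero
        intro x hx; rw [hvanish x hx, zero_mul]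
      rw [hfull]
      have hmono : ∫ x in S, p x * (m / (m - 1) * h x ^ (m - 1))
          ≤ ∫ x in S, (Ω⁻¹ * h x ^ m + Ω ^ (m - 1) / (m - 1) * p x ^ m) := by
        apply integral_mono (hintP'.restrict)
          ((hintQ'.const_mul _).add ((hGfin.restrict).const_mul _))
        intro x
        calc p x * (m / (m - 1) * h x ^ (m - 1))
            = m / (m - 1) * h x ^ (m - 1) * p x := by ring
          _ ≤ Ω⁻¹ * h x ^ m + Ω ^ (m - 1) / (m - 1) * p x ^ m :=
              young_aux hm hΩ (hpos x) (hp0 x)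
      have hsplit : ∫ x in S, (Ω⁻¹ * h x ^ m + Ω ^ (m - 1) / (m - 1) * p x ^ m)
          = Ω⁻¹ * (∫ x in S, h x ^ m) + Ω ^ (m - 1) / (m - 1) * I := by
        rw [integral_add (hintQ'.const_mul _) ((hGfin.restrict).const_mul _),
          integral_const_mul, integral_const_mul, hSI]
      linarith [hmono, hsplit.le, hsplit.ge]
  refine ⟨?_, hgreat⟩
  rw [hgreat.csSup_eq, hval]
  have hone : Ω ^ (1 - m) * Ω ^ (m - 1) = 1 := by
    rw [← Real.rpow_add hΩ]; norm_num
  calc (1 / (m - 1)) * I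
      = (Ω ^ (1 - m) * Ω ^ (m - 1)) * ((1 / (m - 1)) * I) := by rw [hone, one_mul]
    _ = Ω ^ (1 - m) * (Ω ^ (m - 1) / (m - 1) * I) := by ring
end

section
/- (Variational formula for the Jensen–Shannon divergence.) Let P and Q be probability measures on ℝⁿ, each absolutely continuous with respect to (P+Q)/2. Then JSD(P‖Q) = log 4 + sup_h { ∫ log(1 − h(x)) dP(x) + ∫ log h(z) dQ(z) }, where the supremum is over all measurable functions h: ℝⁿ → (0,1) for which both integrals are well-defined. -/
open MeasureTheory Set ENNReal

lemma aux_tlogt {t : ℝ} (h0 : 0 < t) (h2 : t ≤ 2) : t * |Real.log t| ≤ 4 := by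
  rcases le_or_gt 1 t with h1 | h1
  · rw [abs_of_nonneg (Real.log_nonneg h1)]
    nlinarith [Real.log_le_sub_one_of_pos h0]
  · rw [abs_of_neg (Real.log_neg h0 h1)]
    have hinv : 0 < t⁻¹ := inv_pos.mpr h0
    have h3 := Real.log_le_sub_one_of_pos hinv
    rw [Real.log_inv] at h3
    have h4 : t * t⁻¹ = 1 := mul_inv_cancel₀ (ne_of_gt h0)
    nlinarith

lemma aux_clamp_low {a ε : ℝ} (ha0 : 0 ≤ a) (ha2 : a ≤ 2) (hε0 : 0 < ε) (hε : ε ≤ 1/2) :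
    a/2 * (1-ε) ≤ min (max (a/2) ε) (1-ε) := by
  rcases le_total (a/2) ε with h1 | h1
  · rw [max_eq_right h1, min_eq_left (by linarith)]
    nlinarith
  · rw [max_eq_left h1]
    rcases le_total (a/2) (1-ε) with h2 | h2
    · rw [min_eq_left h2]; nlinarith
    · rw [min_eq_right h2]; nlinarith

lemma aux_clamp_high {a ε : ℝ} (ha0 : 0 ≤ a) (ha2 : a ≤ 2) (hε0 : 0 < ε) (hε : ε ≤ 1/2) :
    a/2 * (1-ε) ≤ 1 - min (max ((2-a)/2) ε) (1-ε) := by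
  set b := (2-a)/2 with hb
  rcases le_total b ε with h1 | h1
  · rw [max_eq_right h1, min_eq_left (by linarith)]
    nlinarith
  · rw [max_eq_left h1]
    rcases le_total b (1-ε) with h2 | h2
    · rw [min_eq_left h2]; nlinarith
    · rw [min_eq_right h2]; nlinarith

section meas
variable {α : Type*} {mα : MeasurableSpace α} {μ ν : Measure α}

/-- If `dμ/dν ≤ 2` a.e., then `log (dμ/dν)` is `μ`-integrable. -/
lemma integrable_log_rnDeriv [IsFiniteMeasure μ] [IsFiniteMeasure ν] (hμν : μ ≪ ν)
    (hb : ∀ᵐ x ∂ν, μ.rnDeriv ν x ≤ 2) :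
    Integrable (fun x => Real.log (μ.rnDeriv ν x).toReal) μ := by
  have hmeas : Measurable (fun x => Real.log (μ.rnDeriv ν x).toReal) :=
    Real.measurable_log.comp (Measure.measurable_rnDeriv μ ν).ennreal_toReal
  refine ⟨hmeas.aestronglyMeasurable, ?_⟩
  rw [hasFiniteIntegral_iff_norm]
  have hchg : ∫⁻ x, ENNReal.ofReal ‖Real.log (μ.rnDeriv ν x).toReal‖ ∂μ
      = ∫⁻ x, μ.rnDeriv ν x * ENNReal.ofReal ‖Real.log (μ.rnDeriv ν x).toReal‖ ∂ν := by
    rw [lintegral_rnDeriv_mul hμν]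
    exact (measurable_ofReal.comp hmeas.norm).aemeasurable
  rw [hchg]
  have hbound : ∀ᵐ x ∂ν,
      μ.rnDeriv ν x * ENNReal.ofReal ‖Real.log (μ.rnDeriv ν x).toReal‖ ≤ 4 := by
    filter_upwards [hb, Measure.rnDeriv_ne_top μ ν] with x h2 htop
    set d := μ.rnDeriv ν x with hd
    rcases eq_or_ne d 0 with h0 | h0
    · simp [h0]
    · have hpos : 0 < d.toReal := ENNReal.toReal_pos h0 htop
      have hle2 : d.toReal ≤ 2 := by
        have := ENNReal.toReal_mono (by norm_num) h2
        simpa using this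
      have hrw : d = ENNReal.ofReal d.toReal := (ENNReal.ofReal_toReal htop).symm
      nth_rewrite 1 [hrw]
      rw [← ENNReal.ofReal_mul hpos.le]
      calc ENNReal.ofReal (d.toReal * ‖Real.log d.toReal‖) ≤ ENNReal.ofReal 4 := by
            apply ENNReal.ofReal_le_ofReal
            rw [Real.norm_eq_abs]
            exact aux_tlogt hpos hle2
        _ = 4 := by norm_num
  calc ∫⁻ x, μ.rnDeriv ν x * ENNReal.ofReal ‖Real.log (μ.rnDeriv ν x).toReal‖ ∂ν
      ≤ ∫⁻ _, 4 ∂ν := lintegral_mono_ae hbound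
    _ = 4 * ν Set.univ := by rw [lintegral_const]
    _ < ⊤ := by
        exact ENNReal.mul_lt_top (by norm_num) (measure_lt_top ν _)

/-- Change-of-measure bound for `g / (dμ/dν)`. -/
lemma lintegral_div_rnDeriv_le [IsFiniteMeasure μ] [IsFiniteMeasure ν] (hμν : μ ≪ ν) {g : α → ℝ}
    (hg : Measurable g) :
    ∫⁻ x, ENNReal.ofReal (g x / (μ.rnDeriv ν x).toReal) ∂μ ≤ ∫⁻ x, ENNReal.ofReal (g x) ∂ν := by
  have hmeas : Measurable (fun x => ENNReal.ofReal (g x / (μ.rnDeriv ν x).toReal)) :=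
    measurable_ofReal.comp (hg.div (Measure.measurable_rnDeriv μ ν).ennreal_toReal)
  rw [← lintegral_rnDeriv_mul hμν hmeas.aemeasurable]
  refine lintegral_mono_ae ?_
  filter_upwards [Measure.rnDeriv_ne_top μ ν] with x htop
  set d := μ.rnDeriv ν x with hd
  rcases eq_or_ne d 0 with h0 | h0
  · simp [h0]
  · have hpos : 0 < d.toReal := ENNReal.toReal_pos h0 htop
    refine le_of_eq ?_
    calc d * ENNReal.ofReal (g x / d.toReal)
        = ENNReal.ofReal d.toReal * ENNReal.ofReal (g x / d.toReal) := by
          rw [ENNReal.ofReal_toReal htop]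
      _ = ENNReal.ofReal (d.toReal * (g x / d.toReal)) := (ENNReal.ofReal_mul hpos.le).symm
      _ = ENNReal.ofReal (g x) := by
          rw [mul_comm d.toReal, div_mul_cancel₀ _ (ne_of_gt hpos)]

end meas

section mix
variable {α : Type*} {mα : MeasurableSpace α} (P Q : Measure α)
  [IsProbabilityMeasure P] [IsProbabilityMeasure Q]

lemma mix_prob : IsProbabilityMeasure ((2 : ℝ≥0∞)⁻¹ • (P + Q)) := by
  constructor
  rw [Measure.smul_apply, Measure.add_apply, measure_univ, measure_univ, smul_eq_mul]
  norm_num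
  rw [ENNReal.inv_mul_cancel] <;> norm_num

lemma mix_sum_rnDeriv :
    ∀ᵐ x ∂((2 : ℝ≥0∞)⁻¹ • (P + Q)),
      P.rnDeriv ((2 : ℝ≥0∞)⁻¹ • (P + Q)) x + Q.rnDeriv ((2 : ℝ≥0∞)⁻¹ • (P + Q)) x = 2 := by
  set M := (2 : ℝ≥0∞)⁻¹ • (P + Q) with hM
  haveI : IsProbabilityMeasure M := mix_prob P Q
  have h2M : P + Q = (2 : ℝ≥0∞) • M := by
    rw [hM, smul_smul, ENNReal.mul_inv_cancel (by norm_num) (by norm_num), one_smul]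
  have h1 : (P + Q).rnDeriv M =ᵐ[M] P.rnDeriv M + Q.rnDeriv M := Measure.rnDeriv_add P Q M
  have h2 : ((2 : ℝ≥0∞) • M).rnDeriv M =ᵐ[M] (2 : ℝ≥0∞) • M.rnDeriv M :=
    Measure.rnDeriv_smul_left_of_ne_top M M (by norm_num)
  have h3 : M.rnDeriv M =ᵐ[M] fun _ => 1 := Measure.rnDeriv_self M
  rw [h2M] at h1
  filter_upwards [h1, h2, h3] with x hx1 hx2 hx3
  have := hx1.symm.trans hx2
  simp only [Pi.add_apply, Pi.smul_apply, smul_eq_mul] at this ⊢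
  rw [this, hx3, mul_one]

lemma mix_sum_toReal :
    ∀ᵐ x ∂((2 : ℝ≥0∞)⁻¹ • (P + Q)),
      (P.rnDeriv ((2 : ℝ≥0∞)⁻¹ • (P + Q)) x).toReal
        + (Q.rnDeriv ((2 : ℝ≥0∞)⁻¹ • (P + Q)) x).toReal = 2 := by
  filter_upwards [mix_sum_rnDeriv P Q,
    Measure.rnDeriv_ne_top P ((2 : ℝ≥0∞)⁻¹ • (P + Q)),
    Measure.rnDeriv_ne_top Q ((2 : ℝ≥0∞)⁻¹ • (P + Q))] with x hsum hp hq
  rw [← ENNReal.toReal_add hp hq, hsum]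
  norm_num

lemma mix_rnDeriv_le_two :
    ∀ᵐ x ∂((2 : ℝ≥0∞)⁻¹ • (P + Q)),
      P.rnDeriv ((2 : ℝ≥0∞)⁻¹ • (P + Q)) x ≤ 2 := by
  filter_upwards [mix_sum_rnDeriv P Q] with x hsum
  calc P.rnDeriv _ x ≤ P.rnDeriv _ x + Q.rnDeriv _ x := le_self_add
    _ = 2 := hsum

lemma mix_rnDeriv_le_two' :
    ∀ᵐ x ∂((2 : ℝ≥0∞)⁻¹ • (P + Q)),
      Q.rnDeriv ((2 : ℝ≥0∞)⁻¹ • (P + Q)) x ≤ 2 := by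
  filter_upwards [mix_sum_rnDeriv P Q] with x hsum
  calc Q.rnDeriv _ x ≤ P.rnDeriv _ x + Q.rnDeriv _ x := le_add_self
    _ = 2 := hsum

lemma log_four : Real.log 4 = 2 * Real.log 2 := by
  rw [show (4:ℝ) = 2^2 by norm_num, Real.log_pow]
  push_cast; ring

lemma upper_bound (hP : P ≪ (2 : ℝ≥0∞)⁻¹ • (P + Q)) (hQ : Q ≪ (2 : ℝ≥0∞)⁻¹ • (P + Q))
    {h : α → ℝ} (hmeas : Measurable h) (hIoo : ∀ x, h x ∈ Set.Ioo (0:ℝ) 1)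
    (hint1 : Integrable (fun x => Real.log (1 - h x)) P)
    (hint2 : Integrable (fun x => Real.log (h x)) Q) :
    (∫ x, Real.log (1 - h x) ∂P) + ∫ x, Real.log (h x) ∂Q ≤
      (∫ x, Real.log (P.rnDeriv ((2 : ℝ≥0∞)⁻¹ • (P + Q)) x).toReal ∂P)
        + (∫ x, Real.log (Q.rnDeriv ((2 : ℝ≥0∞)⁻¹ • (P + Q)) x).toReal ∂Q)
        - Real.log 4 := by
  set M := (2 : ℝ≥0∞)⁻¹ • (P + Q) with hM
  haveI : IsProbabilityMeasure M := mix_prob P Q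
  set p := fun x => (P.rnDeriv M x).toReal with hp
  set q := fun x => (Q.rnDeriv M x).toReal with hq
  have hpmeas : Measurable p := (Measure.measurable_rnDeriv P M).ennreal_toReal
  have hqmeas : Measurable q := (Measure.measurable_rnDeriv Q M).ennreal_toReal
  have hintp : Integrable (fun x => Real.log (p x)) P :=
    integrable_log_rnDeriv hP (mix_rnDeriv_le_two P Q)
  have hintq : Integrable (fun x => Real.log (q x)) Q :=
    integrable_log_rnDeriv hQ (mix_rnDeriv_le_two' P Q)
  set g₁ := fun x => 2 * (1 - h x) / p x with hg₁
  set g₂ := fun x => 2 * h x / q x with hg₂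
  have hg₁meas : Measurable g₁ := ((measurable_const.sub hmeas).const_mul 2).div hpmeas
  have hg₂meas : Measurable g₂ := (hmeas.const_mul 2).div hqmeas
  have hg₁nonneg : ∀ x, 0 ≤ g₁ x := fun x =>
    div_nonneg (by nlinarith [(hIoo x).2]) ENNReal.toReal_nonneg
  have hg₂nonneg : ∀ x, 0 ≤ g₂ x := fun x =>
    div_nonneg (by nlinarith [(hIoo x).1]) ENNReal.toReal_nonneg
  set A₁ := ∫⁻ x, ENNReal.ofReal (2 * (1 - h x)) ∂M with hA₁
  set A₂ := ∫⁻ x, ENNReal.ofReal (2 * h x) ∂M with hA₂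
  have hL1 : ∫⁻ x, ENNReal.ofReal (g₁ x) ∂P ≤ A₁ :=
    lintegral_div_rnDeriv_le hP ((measurable_const.sub hmeas).const_mul 2)
  have hL2 : ∫⁻ x, ENNReal.ofReal (g₂ x) ∂Q ≤ A₂ :=
    lintegral_div_rnDeriv_le hQ (hmeas.const_mul 2)
  have hsumA : A₁ + A₂ = 2 := by
    have hm1 : Measurable fun x => ENNReal.ofReal (2 * (1 - h x)) :=
      ((measurable_const.sub hmeas).const_mul 2).ennreal_ofReal
    rw [hA₁, hA₂, ← lintegral_add_left hm1]
    have : ∀ x, ENNReal.ofReal (2 * (1 - h x)) + ENNReal.ofReal (2 * h x)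
        = ENNReal.ofReal 2 := by
      intro x
      rw [← ENNReal.ofReal_add (by nlinarith [(hIoo x).2]) (by nlinarith [(hIoo x).1])]
      ring_nf
    simp only [Function.comp, this]
    rw [lintegral_const, measure_univ, mul_one]
    norm_num
  have hA₁ne : A₁ ≠ ⊤ := by
    intro hcon
    rw [hcon, top_add] at hsumA
    exact ENNReal.ofNat_ne_top hsumA.symm
  have hA₂ne : A₂ ≠ ⊤ := by
    intro hcon
    rw [hcon, add_top] at hsumA
    exact ENNReal.ofNat_ne_top hsumA.symm
  have hg₁int : Integrable g₁ P := by
    refine ⟨hg₁meas.aestronglyMeasurable, ?_⟩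
    rw [hasFiniteIntegral_iff_norm]
    have : ∀ x, ENNReal.ofReal ‖g₁ x‖ = ENNReal.ofReal (g₁ x) := by
      intro x; rw [Real.norm_eq_abs, abs_of_nonneg (hg₁nonneg x)]
    simp only [this]
    exact lt_of_le_of_lt hL1 (lt_of_le_of_ne le_top hA₁ne)
  have hg₂int : Integrable g₂ Q := by
    refine ⟨hg₂meas.aestronglyMeasurable, ?_⟩
    rw [hasFiniteIntegral_iff_norm]
    have : ∀ x, ENNReal.ofReal ‖g₂ x‖ = ENNReal.ofReal (g₂ x) := by
      intro x; rw [Real.norm_eq_abs, abs_of_nonneg (hg₂nonneg x)]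
    simp only [this]
    exact lt_of_le_of_lt hL2 (lt_of_le_of_ne le_top hA₂ne)
  have hv1 : ∫ x, g₁ x ∂P = (∫⁻ x, ENNReal.ofReal (g₁ x) ∂P).toReal :=
    integral_eq_lintegral_of_nonneg_ae (Filter.Eventually.of_forall hg₁nonneg)
      hg₁meas.aestronglyMeasurable
  have hv2 : ∫ x, g₂ x ∂Q = (∫⁻ x, ENNReal.ofReal (g₂ x) ∂Q).toReal :=
    integral_eq_lintegral_of_nonneg_ae (Filter.Eventually.of_forall hg₂nonneg)
      hg₂meas.aestronglyMeasurable
  have key : (∫ x, g₁ x ∂P) + ∫ x, g₂ x ∂Q ≤ 2 := by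
    rw [hv1, hv2]
    have t1 : (∫⁻ x, ENNReal.ofReal (g₁ x) ∂P).toReal ≤ A₁.toReal :=
      ENNReal.toReal_mono hA₁ne hL1
    have t2 : (∫⁻ x, ENNReal.ofReal (g₂ x) ∂Q).toReal ≤ A₂.toReal :=
      ENNReal.toReal_mono hA₂ne hL2
    have t3 : A₁.toReal + A₂.toReal = 2 := by
      rw [← ENNReal.toReal_add hA₁ne hA₂ne, hsumA]
      norm_num
    linarith
  have hptP : ∀ᵐ x ∂P, Real.log 2 + Real.log (1 - h x) - Real.log (p x) ≤ g₁ x - 1 := by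
    filter_upwards [Measure.rnDeriv_pos hP, hP.ae_le (Measure.rnDeriv_ne_top P M)]
      with x hpos htop
    have hp0 : 0 < p x := ENNReal.toReal_pos (ne_of_gt hpos) htop
    have h1 : 0 < 1 - h x := by linarith [(hIoo x).2]
    have hlog := Real.log_le_sub_one_of_pos
      (show 0 < 2 * (1 - h x) / p x by positivity)
    rw [Real.log_div (by positivity) (ne_of_gt hp0),
      Real.log_mul two_ne_zero (ne_of_gt h1)] at hlog
    exact hlog
  have hptQ : ∀ᵐ x ∂Q, Real.log 2 + Real.log (h x) - Real.log (q x) ≤ g₂ x - 1 := by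
    filter_upwards [Measure.rnDeriv_pos hQ, hQ.ae_le (Measure.rnDeriv_ne_top Q M)]
      with x hpos htop
    have hq0 : 0 < q x := ENNReal.toReal_pos (ne_of_gt hpos) htop
    have h1 : 0 < h x := (hIoo x).1
    have hlog := Real.log_le_sub_one_of_pos
      (show 0 < 2 * h x / q x by positivity)
    rw [Real.log_div (by positivity) (ne_of_gt hq0),
      Real.log_mul two_ne_zero (ne_of_gt h1)] at hlog
    exact hlog
  have hmono1 : ∫ x, (Real.log 2 + Real.log (1 - h x) - Real.log (p x)) ∂P
      ≤ ∫ x, (g₁ x - 1) ∂P :=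
    integral_mono_ae (((integrable_const _).add hint1).sub hintp)
      (hg₁int.sub (integrable_const 1)) hptP
  have hmono2 : ∫ x, (Real.log 2 + Real.log (h x) - Real.log (q x)) ∂Q
      ≤ ∫ x, (g₂ x - 1) ∂Q :=
    integral_mono_ae (((integrable_const _).add hint2).sub hintq)
      (hg₂int.sub (integrable_const 1)) hptQ
  have e1 : ∫ x, (Real.log 2 + Real.log (1 - h x) - Real.log (p x)) ∂P
      = Real.log 2 + (∫ x, Real.log (1 - h x) ∂P) - ∫ x, Real.log (p x) ∂P := by
    have hsub := integral_sub (f := fun x => Real.log 2 + Real.log (1 - h x))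
      (g := fun x => Real.log (p x)) ((integrable_const _).add hint1) hintp
    have hadd := integral_add (f := fun _ => Real.log 2)
      (g := fun x => Real.log (1 - h x)) (μ := P) (integrable_const _) hint1
    rw [hsub, hadd, integral_const]
    simp
  have e2 : ∫ x, (Real.log 2 + Real.log (h x) - Real.log (q x)) ∂Q
      = Real.log 2 + (∫ x, Real.log (h x) ∂Q) - ∫ x, Real.log (q x) ∂Q := by
    have hsub := integral_sub (f := fun x => Real.log 2 + Real.log (h x))
      (g := fun x => Real.log (q x)) ((integrable_const _).add hint2) hintq
    have hadd := integral_add (f := fun _ => Real.log 2)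
      (g := fun x => Real.log (h x)) (μ := Q) (integrable_const _) hint2
    rw [hsub, hadd, integral_const]
    simp
  have e3 : ∫ x, (g₁ x - 1) ∂P = (∫ x, g₁ x ∂P) - 1 := by
    rw [integral_sub hg₁int (integrable_const 1), integral_const]
    simp
  have e4 : ∫ x, (g₂ x - 1) ∂Q = (∫ x, g₂ x ∂Q) - 1 := by
    rw [integral_sub hg₂int (integrable_const 1), integral_const]
    simp
  rw [e1, e3] at hmono1
  rw [e2, e4] at hmono2
  rw [log_four]
  linarith

lemma aux_logbound {t ε : ℝ} (hε0 : 0 < ε) (hε : ε ≤ 1/2) (h1 : ε ≤ t) (h2 : t ≤ 1-ε) :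
    |Real.log t| ≤ |Real.log ε| := by
  have ht0 : 0 < t := lt_of_lt_of_le hε0 h1
  have hmono : Real.log ε ≤ Real.log t := Real.log_le_log hε0 h1
  rw [abs_of_nonpos (Real.log_nonpos ht0.le (by linarith)),
    abs_of_nonpos (Real.log_nonpos hε0.le (by linarith))]
  linarith

lemma lower_family (hP : P ≪ (2 : ℝ≥0∞)⁻¹ • (P + Q)) (hQ : Q ≪ (2 : ℝ≥0∞)⁻¹ • (P + Q))
    {ε : ℝ} (hε0 : 0 < ε) (hε : ε ≤ 1/2) :
    ∃ h : α → ℝ, Measurable h ∧ (∀ x, h x ∈ Set.Ioo (0:ℝ) 1) ∧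
      Integrable (fun x => Real.log (1 - h x)) P ∧
      Integrable (fun x => Real.log (h x)) Q ∧
      ((∫ x, Real.log (P.rnDeriv ((2 : ℝ≥0∞)⁻¹ • (P + Q)) x).toReal ∂P)
        + (∫ x, Real.log (Q.rnDeriv ((2 : ℝ≥0∞)⁻¹ • (P + Q)) x).toReal ∂Q)
        - Real.log 4) + 2 * Real.log (1-ε)
        ≤ (∫ x, Real.log (1 - h x) ∂P) + ∫ x, Real.log (h x) ∂Q := by
  set M := (2 : ℝ≥0∞)⁻¹ • (P + Q) with hM
  haveI : IsProbabilityMeasure M := mix_prob P Q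
  set p := fun x => (P.rnDeriv M x).toReal with hp
  set q := fun x => (Q.rnDeriv M x).toReal with hq
  have hpmeas : Measurable p := (Measure.measurable_rnDeriv P M).ennreal_toReal
  have hqmeas : Measurable q := (Measure.measurable_rnDeriv Q M).ennreal_toReal
  have hintp : Integrable (fun x => Real.log (p x)) P :=
    integrable_log_rnDeriv hP (mix_rnDeriv_le_two P Q)
  have hintq : Integrable (fun x => Real.log (q x)) Q :=
    integrable_log_rnDeriv hQ (mix_rnDeriv_le_two' P Q)
  set h := fun x => min (max (q x / 2) ε) (1-ε) with hh
  have hmeas : Measurable h := ((hqmeas.div_const 2).max measurable_const).min measurable_const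
  have hlo : ∀ x, ε ≤ h x := fun x => le_min (le_max_right _ _) (by linarith)
  have hhi : ∀ x, h x ≤ 1 - ε := fun x => min_le_right _ _
  have hIoo : ∀ x, h x ∈ Set.Ioo (0:ℝ) 1 := fun x =>
    ⟨lt_of_lt_of_le hε0 (hlo x), lt_of_le_of_lt (hhi x) (by linarith)⟩
  have hint1 : Integrable (fun x => Real.log (1 - h x)) P := by
    refine Integrable.mono' (integrable_const |Real.log ε|)
      (Real.measurable_log.comp (measurable_const.sub hmeas)).aestronglyMeasurable ?_
    refine Filter.Eventually.of_forall fun x => ?_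
    rw [Real.norm_eq_abs]
    exact aux_logbound hε0 hε (by linarith [hhi x]) (by linarith [hlo x])
  have hint2 : Integrable (fun x => Real.log (h x)) Q := by
    refine Integrable.mono' (integrable_const |Real.log ε|)
      (Real.measurable_log.comp hmeas).aestronglyMeasurable ?_
    refine Filter.Eventually.of_forall fun x => ?_
    rw [Real.norm_eq_abs]
    exact aux_logbound hε0 hε (hlo x) (hhi x)
  refine ⟨h, hmeas, hIoo, hint1, hint2, ?_⟩
  -- pointwise bounds
  have haeP : ∀ᵐ x ∂P, Real.log (p x) + (Real.log (1-ε) - Real.log 2)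
      ≤ Real.log (1 - h x) := by
    filter_upwards [Measure.rnDeriv_pos hP, hP.ae_le (Measure.rnDeriv_ne_top P M),
      hP.ae_le (mix_sum_toReal P Q)] with x hpos htop hsum
    have hp0 : 0 < p x := ENNReal.toReal_pos (ne_of_gt hpos) htop
    have hp2 : p x ≤ 2 := by linarith [ENNReal.toReal_nonneg (a := Q.rnDeriv M x)]
    have hqx : q x = 2 - p x := by linarith
    have hclamp : p x / 2 * (1-ε) ≤ 1 - h x := by
      rw [hh]
      simp only [hqx]
      exact aux_clamp_high hp0.le hp2 hε0 hε
    have hpos2 : 0 < p x / 2 * (1-ε) := by nlinarith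
    calc Real.log (p x) + (Real.log (1-ε) - Real.log 2)
        = Real.log (p x / 2 * (1-ε)) := by
          rw [Real.log_mul (by positivity) (show (1:ℝ)-ε ≠ 0 by linarith),
            Real.log_div (ne_of_gt hp0) two_ne_zero]
          ring
      _ ≤ Real.log (1 - h x) := Real.log_le_log hpos2 hclamp
  have haeQ : ∀ᵐ x ∂Q, Real.log (q x) + (Real.log (1-ε) - Real.log 2)
      ≤ Real.log (h x) := by
    filter_upwards [Measure.rnDeriv_pos hQ, hQ.ae_le (Measure.rnDeriv_ne_top Q M),
      hQ.ae_le (mix_sum_toReal P Q)] with x hpos htop hsum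
    have hq0 : 0 < q x := ENNReal.toReal_pos (ne_of_gt hpos) htop
    have hq2 : q x ≤ 2 := by linarith [ENNReal.toReal_nonneg (a := P.rnDeriv M x)]
    have hclamp : q x / 2 * (1-ε) ≤ h x := aux_clamp_low hq0.le hq2 hε0 hε
    have hpos2 : 0 < q x / 2 * (1-ε) := by nlinarith
    calc Real.log (q x) + (Real.log (1-ε) - Real.log 2)
        = Real.log (q x / 2 * (1-ε)) := by
          rw [Real.log_mul (by positivity) (show (1:ℝ)-ε ≠ 0 by linarith),
            Real.log_div (ne_of_gt hq0) two_ne_zero]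
          ring
      _ ≤ Real.log (h x) := Real.log_le_log hpos2 hclamp
  have hmono1 : ∫ x, (Real.log (p x) + (Real.log (1-ε) - Real.log 2)) ∂P
      ≤ ∫ x, Real.log (1 - h x) ∂P :=
    integral_mono_ae (hintp.add (integrable_const _)) hint1 haeP
  have hmono2 : ∫ x, (Real.log (q x) + (Real.log (1-ε) - Real.log 2)) ∂Q
      ≤ ∫ x, Real.log (h x) ∂Q :=
    integral_mono_ae (hintq.add (integrable_const _)) hint2 haeQ
  have e1 : ∫ x, (Real.log (p x) + (Real.log (1-ε) - Real.log 2)) ∂P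
      = (∫ x, Real.log (p x) ∂P) + (Real.log (1-ε) - Real.log 2) := by
    rw [integral_add hintp (integrable_const _), integral_const]
    simp
  have e2 : ∫ x, (Real.log (q x) + (Real.log (1-ε) - Real.log 2)) ∂Q
      = (∫ x, Real.log (q x) ∂Q) + (Real.log (1-ε) - Real.log 2) := by
    rw [integral_add hintq (integrable_const _), integral_const]
    simp
  rw [e1] at hmono1
  rw [e2] at hmono2
  rw [log_four]
  linarith

end mix

open MeasureTheory Set ENNReal

/-- The Kullback–Leibler divergence `D(P‖Q) = ∫ log(dP/dQ) dP`. -/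
noncomputable def klDiv {n : ℕ} (P Q : Measure (Fin n → ℝ)) : ℝ :=
  ∫ x, Real.log ((P.rnDeriv Q x).toReal) ∂P

/-- The (twice) Jensen–Shannon divergence
`JSD(P‖Q) = D(P‖(P+Q)/2) + D(Q‖(P+Q)/2)`. -/
noncomputable def jsd {n : ℕ} (P Q : Measure (Fin n → ℝ)) : ℝ :=
  klDiv P ((2 : ℝ≥0∞)⁻¹ • (P + Q)) + klDiv Q ((2 : ℝ≥0∞)⁻¹ • (P + Q))

/-- Variational formula for the Jensen–Shannon divergence:
`JSD(P‖Q) = log 4 + sup_h { ∫ log(1 − h) dP + ∫ log h dQ }`, the supremum being over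
all measurable `h : ℝⁿ → (0,1)` for which both integrals are well-defined. -/
theorem jsd_variational {n : ℕ} (P Q : Measure (Fin n → ℝ))
    [IsProbabilityMeasure P] [IsProbabilityMeasure Q]
    (hP : P ≪ (2 : ℝ≥0∞)⁻¹ • (P + Q))
    (hQ : Q ≪ (2 : ℝ≥0∞)⁻¹ • (P + Q)) :
    jsd P Q = Real.log 4 +
      sSup {r : ℝ | ∃ h : (Fin n → ℝ) → ℝ, Measurable h ∧
        (∀ x, h x ∈ Set.Ioo (0:ℝ) 1) ∧
        Integrable (fun x => Real.log (1 - h x)) P ∧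
        Integrable (fun x => Real.log (h x)) Q ∧
        r = (∫ x, Real.log (1 - h x) ∂P) + ∫ x, Real.log (h x) ∂Q} := by
  have hjsd : jsd P Q =
      (∫ x, Real.log (P.rnDeriv ((2 : ℝ≥0∞)⁻¹ • (P + Q)) x).toReal ∂P)
        + ∫ x, Real.log (Q.rnDeriv ((2 : ℝ≥0∞)⁻¹ • (P + Q)) x).toReal ∂Q := rfl
  set B := (∫ x, Real.log (P.rnDeriv ((2 : ℝ≥0∞)⁻¹ • (P + Q)) x).toReal ∂P)
    + (∫ x, Real.log (Q.rnDeriv ((2 : ℝ≥0∞)⁻¹ • (P + Q)) x).toReal ∂Q)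
    - Real.log 4 with hB
  have hsup : sSup {r : ℝ | ∃ h : (Fin n → ℝ) → ℝ, Measurable h ∧
      (∀ x, h x ∈ Set.Ioo (0:ℝ) 1) ∧
      Integrable (fun x => Real.log (1 - h x)) P ∧
      Integrable (fun x => Real.log (h x)) Q ∧
      r = (∫ x, Real.log (1 - h x) ∂P) + ∫ x, Real.log (h x) ∂Q} = B := by
    apply csSup_eq_of_forall_le_of_forall_lt_exists_gt
    · obtain ⟨h, hm, hi, h1, h2, _⟩ :=
        lower_family P Q hP hQ (by norm_num : (0:ℝ) < 1/2) le_rfl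
      exact ⟨_, ⟨h, hm, hi, h1, h2, rfl⟩⟩
    · rintro a ⟨h, hm, hi, h1, h2, rfl⟩
      exact upper_bound P Q hP hQ hm hi h1 h2
    · intro w hw
      set δ := B - w with hδ
      have hδ0 : 0 < δ := by linarith
      set c := Real.exp (-(δ/2)) with hc
      have hc1 : c < 1 := by
        rw [hc]
        apply Real.exp_lt_one_iff.mpr
        linarith
      have hc0 : 0 < c := Real.exp_pos _
      set ε := min (1/2 : ℝ) ((1-c)/2) with hε
      have hε0 : 0 < ε := lt_min (by norm_num) (by linarith)
      have hεhalf : ε ≤ 1/2 := min_le_left _ _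
      have hε2 : ε ≤ (1-c)/2 := min_le_right _ _
      have hc' : c < 1 - ε := by linarith
      have hlog : -(δ/2) < Real.log (1-ε) := by
        have := Real.log_lt_log hc0 hc'
        rwa [hc, Real.log_exp] at this
      obtain ⟨h, hm, hi, h1, h2, hineq⟩ := lower_family P Q hP hQ hε0 hεhalf
      refine ⟨_, ⟨h, hm, hi, h1, h2, rfl⟩, ?_⟩
      have hBle : B + 2 * Real.log (1-ε)
          ≤ (∫ x, Real.log (1 - h x) ∂P) + ∫ x, Real.log (h x) ∂Q := hineq
      linarith
  rw [hjsd, hsup, hB]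
  ring
end
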